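/- The L-structure F²_ℝ, whose universe is the set of all lines in the Euclidean plane with the binary relation O interpreted as perpendicularity of lines, is a model of the theory SAPP. -/

import Mathlib

open FirstOrder Language Structure BoundedFormula

/-- The relation symbols of the language `L`: a single binary relation `O`. -/
inductive PerpRel : ℕ → Type
  | o : PerpRel 2

/-- The first-order language with a single binary relation symbol `O`. -/
def L : Language := ⟨fun _ => Empty, PerpRel⟩
  deriving IsRelational

/-- The binary relation symbol `O` of `L`. -/
abbrev oSym : L.Relations 2 := .o

/-- `O(xᵢ, xⱼ)` as a bounded formula. -/
def oBF {n : ℕ} (i j : Fin n) : L.BoundedFormula Empty n :=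
  oSym.boundedFormula₂ (&i) (&j)

/-- Finite conjunction of a list of bounded formulas. -/
def andAll {n : ℕ} : List (L.BoundedFormula Empty n) → L.BoundedFormula Empty n
  | [] => ⊤
  | φ :: l => φ ⊓ andAll l

/-- λ₁ₙ : ∀y₁…∀yₙ∀s(O(s,y₁) ∧ … ∧ O(s,yₙ) → ∃t(t ≠ y₁ ∧ … ∧ t ≠ yₙ ∧ O(s,t))).
Variables: y₁,…,yₙ are de Bruijn indices 0,…,n-1, s is index n, t is index n+1. -/
def lam1 (n : ℕ) : L.Sentence :=
  ((andAll ((List.finRange n).map fun i => oBF (Fin.last n) i.castSucc)).imp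
    ((andAll ((List.finRange n).map fun i =>
        ∼((&(Fin.last (n + 1))) =' (&(i.castSucc.castSucc)))) ⊓
      oBF ((Fin.last n).castSucc) (Fin.last (n + 1))).ex)).alls

/-- λ₂ₙ : ∀y₁…∀yₙ∃s(¬O(s,y₁) ∧ … ∧ ¬O(s,yₙ)).
Variables: y₁,…,yₙ are de Bruijn indices 0,…,n-1, s is index n. -/
def lam2 (n : ℕ) : L.Sentence :=
  ((andAll ((List.finRange n).map fun i => ∼(oBF (Fin.last n) i.castSucc))).ex).alls

/-- λ₃ : ∀x ¬O(x,x). -/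
def lam3 : L.Sentence := (∼(oBF (0 : Fin 1) 0)).alls

/-- λ₄ : ∀x∀y(O(x,y) → O(y,x)). -/
def lam4 : L.Sentence := ((oBF (0 : Fin 2) 1).imp (oBF (1 : Fin 2) 0)).alls

/-- λ₅ : ∀x∃y O(x,y). -/
def lam5 : L.Sentence := ((oBF (0 : Fin 2) 1).ex).alls

/-- λ₆ : ∀x∀y∀z∀t(O(x,z) ∧ O(y,z) ∧ O(x,t) → O(y,t)). -/
def lam6 : L.Sentence :=
  ((oBF (0 : Fin 4) 2 ⊓ oBF (1 : Fin 4) 2 ⊓ oBF (0 : Fin 4) 3).imp (oBF (1 : Fin 4) 3)).alls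

/-- The theory SAPP. -/
def SAPP : L.Theory :=
  {φ | ∃ n, 1 ≤ n ∧ φ = lam1 n} ∪ {φ | ∃ n, 2 ≤ n ∧ φ = lam2 n} ∪ {lam3, lam4, lam5, lam6}

/-- The Euclidean plane ℝ². -/
abbrev Plane := EuclideanSpace ℝ (Fin 2)

/-- A line in the Euclidean plane: a one-dimensional affine subspace of ℝ². -/
structure Line where
  carrier : AffineSubspace ℝ Plane
  one_dim : Module.finrank ℝ carrier.direction = 1

/-- Two lines are perpendicular iff their direction subspaces are orthogonal. -/
def Line.Perp (a b : Line) : Prop :=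
  a.carrier.direction ⟂ b.carrier.direction

/-- The structure F²_ℝ of all lines in the Euclidean plane, with `O` interpreted
as perpendicularity. -/
instance : L.Structure Line where
  RelMap | .o => fun x => Line.Perp (x 0) (x 1)

open Module


lemma plane_rank : finrank ℝ Plane = 2 := by simp

lemma orth_rank (d : Submodule ℝ Plane) (hd : finrank ℝ d = 1) : finrank ℝ dᗮ = 1 := by
  have := d.finrank_add_finrank_orthogonal
  rw [hd, plane_rank] at this; omega



noncomputable def mkLine (p : Plane) (d : Submodule ℝ Plane) (hd : finrank ℝ d = 1) : Line :=
  ⟨AffineSubspace.mk' p d, by rw [AffineSubspace.direction_mk']; exact hd⟩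

lemma mkLine_dir (p : Plane) (d : Submodule ℝ Plane) (hd : finrank ℝ d = 1) :
    (mkLine p d hd).carrier.direction = d := AffineSubspace.direction_mk' p d

lemma perp_iff (a b : Line) : a.Perp b ↔ b.carrier.direction = a.carrier.direction ᗮ := by
  constructor
  · intro h
    have h2 : b.carrier.direction ≤ a.carrier.direction ᗮ :=
      (Submodule.isOrtho_iff_le.mp h.symm)
    exact (Submodule.eq_of_le_of_finrank_eq h2
      (by rw [b.one_dim, orth_rank _ a.one_dim]))
  · intro h
    rw [Line.Perp, h]
    exact Submodule.isOrtho_orthogonal_right _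

lemma not_perp_self (a : Line) : ¬ a.Perp a := by
  intro h
  have := Submodule.isOrtho_self.mp h
  have h1 := a.one_dim
  rw [this] at h1
  simp at h1

lemma perp_symm {a b : Line} (h : a.Perp b) : b.Perp a := h.symm

lemma dir_eq_of_perp_perp {x y z : Line} (hx : x.Perp z) (hy : y.Perp z) :
    x.carrier.direction = y.carrier.direction := by
  have h1 := (perp_iff z x).mp (perp_symm hx)
  have h2 := (perp_iff z y).mp (perp_symm hy)
  rw [h1, h2]

-- exists nonzero vector in a finrank-1 submodule
lemma exists_ne_zero_mem (d : Submodule ℝ Plane) (hd : finrank ℝ d = 1) :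
    ∃ w ∈ d, w ≠ 0 := by
  have : d ≠ ⊥ := by
    intro h; rw [h] at hd; simp at hd
  obtain ⟨w, hw, hw0⟩ := Submodule.exists_mem_ne_zero_of_ne_bot this
  exact ⟨w, hw, hw0⟩

-- injectivity of the family of parallel lines
lemma mkLine_inj (d : Submodule ℝ Plane) (hd : finrank ℝ d = 1) {w : Plane}
    (hw : w ∈ dᗮ) (hw0 : w ≠ 0) :
    Function.Injective (fun c : ℝ => mkLine (c • w) d hd) := by
  intro c c' h
  have hcar : AffineSubspace.mk' (c • w) d = AffineSubspace.mk' (c' • w) d :=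
    congrArg Line.carrier h
  have hmem : c • w ∈ AffineSubspace.mk' (c' • w) d := by
    rw [← hcar]; exact AffineSubspace.self_mem_mk' _ _
  rw [AffineSubspace.mem_mk'] at hmem
  have hd2 : (c - c') • w ∈ d := by
    rw [sub_smul]
    simpa [vsub_eq_sub] using hmem
  have h0 : (c - c') • w = 0 := by
    have h2 : (c - c') • w ∈ dᗮ := Submodule.smul_mem _ _ hw
    have hm : (c - c') • w ∈ d ⊓ dᗮ := ⟨hd2, h2⟩
    rw [d.inf_orthogonal_eq_bot] at hm
    simpa using hm
  rcases smul_eq_zero.mp h0 with h | h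
  · have : c - c' = 0 := h
    linarith
  · exact absurd h hw0

-- injectivity of c ↦ span of (1, c)
noncomputable def vc (c : ℝ) : Plane := WithLp.toLp 2 ![1, c]

lemma vc_ne_zero (c : ℝ) : vc c ≠ 0 := by
  intro h
  have : (vc c) 0 = 0 := by rw [h]; rfl
  simp [vc] at this

lemma span_vc_inj : Function.Injective (fun c => Submodule.span ℝ {vc c}) := by
  intro c c' h
  have : vc c' ∈ Submodule.span ℝ {vc c} := by
    have h' : Submodule.span ℝ {vc c} = Submodule.span ℝ {vc c'} := h
    rw [h']; exact Submodule.mem_span_singleton_self _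
  obtain ⟨k, hk⟩ := Submodule.mem_span_singleton.mp this
  have h0 : (k • vc c) 0 = (vc c') 0 := by rw [hk]
  have h1 : (k • vc c) 1 = (vc c') 1 := by rw [hk]
  simp [vc] at h0 h1
  rw [h0] at h1; linarith

@[simp] lemma relMap_o (v : Fin 2 → Line) :
    Structure.RelMap (oSym) v = Line.Perp (v 0) (v 1) := rfl

@[simp] lemma realize_oBF {n : ℕ} {i j : Fin n} {v : Empty → Line} {xs : Fin n → Line} :
    (oBF i j).Realize v xs ↔ (xs i).Perp (xs j) := by
  simp [oBF]

@[simp] lemma realize_andAll {n : ℕ} {l : List (L.BoundedFormula Empty n)}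
    {v : Empty → Line} {xs : Fin n → Line} :
    (andAll l).Realize v xs ↔ ∀ φ ∈ l, φ.Realize v xs := by
  induction l with
  | nil => simp [andAll]
  | cons φ l ih => simp [andAll, ih]

lemma sat_lam3 : Line ⊨ lam3 := by
  have := not_perp_self
  simp_all [lam3, Sentence.Realize]

lemma sat_lam4 : Line ⊨ lam4 := by
  simp only [lam4, Sentence.Realize, realize_alls, realize_imp, realize_oBF]
  intro xs
  exact perp_symm

lemma sat_lam5 : Line ⊨ lam5 := by
  simp only [lam5, Sentence.Realize, realize_alls, realize_ex, realize_oBF]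
  intro xs
  refine ⟨mkLine 0 ((xs 0).carrier.direction)ᗮ (orth_rank _ (xs 0).one_dim), ?_⟩
  show Line.Perp _ _
  rw [perp_iff]
  have h1 : (1 : Fin 2) = Fin.last 1 := rfl
  have h0 : (0 : Fin 2) = Fin.castSucc 0 := rfl
  rw [h1, h0, Fin.snoc_last, Fin.snoc_castSucc, mkLine_dir]

lemma sat_lam6 : Line ⊨ lam6 := by
  simp only [lam6, Sentence.Realize, realize_alls, realize_imp, realize_inf, realize_oBF]
  rintro xs ⟨⟨h02, h12⟩, h03⟩
  show Line.Perp _ _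
  unfold Line.Perp
  rw [← dir_eq_of_perp_perp h02 h12]
  exact h03

lemma sat_lam2 (n : ℕ) : Line ⊨ lam2 n := by
  simp only [lam2, Sentence.Realize, realize_alls, realize_ex, realize_andAll,
    List.mem_map, List.mem_finRange]
  intro xs
  -- choose a direction avoiding the orthogonal complements of the xs i
  set T : Set (Submodule ℝ Plane) :=
    Set.range (fun i : Fin n => ((xs i).carrier.direction)ᗮ) with hT
  have hTfin : T.Finite := Set.finite_range _
  have hinf : (Set.range (fun c : ℝ => Submodule.span ℝ {vc c})).Infinite :=
    Set.infinite_range_of_injective span_vc_inj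
  obtain ⟨d, ⟨⟨c, rfl⟩, hdT⟩⟩ := (hinf.diff hTfin).nonempty
  have hd1 : finrank ℝ (Submodule.span ℝ {vc c}) = 1 :=
    finrank_span_singleton (vc_ne_zero c)
  refine ⟨mkLine 0 _ hd1, ?_⟩
  rintro φ ⟨i, ⟨-, rfl⟩⟩
  simp only [realize_not, realize_oBF, Fin.snoc_last, Fin.snoc_castSucc]
  intro hperp
  refine hdT ⟨i, ?_⟩
  show ((xs i).carrier.direction)ᗮ = Submodule.span ℝ {vc c}
  rw [← mkLine_dir 0 (Submodule.span ℝ {vc c}) hd1]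
  exact ((perp_iff _ _).mp (perp_symm hperp)).symm

lemma sat_lam1 (n : ℕ) : Line ⊨ lam1 n := by
  simp only [lam1, Sentence.Realize, realize_alls, realize_imp, realize_ex, realize_inf,
    realize_andAll, List.mem_map, List.mem_finRange]
  intro xs _
  set s := xs (Fin.last n) with hs
  set d := (s.carrier.direction)ᗮ with hd
  have hd1 : finrank ℝ d = 1 := orth_rank _ s.one_dim
  obtain ⟨w, hw, hw0⟩ := exists_ne_zero_mem dᗮ (orth_rank d hd1)
  have hinj := mkLine_inj d hd1 hw hw0
  have hinf : (Set.range (fun c : ℝ => mkLine (c • w) d hd1)).Infinite :=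
    Set.infinite_range_of_injective hinj
  have hTfin : (Set.range (fun i : Fin n => xs i.castSucc)).Finite := Set.finite_range _
  obtain ⟨t, ⟨⟨c, rfl⟩, htT⟩⟩ := (hinf.diff hTfin).nonempty
  refine ⟨mkLine (c • w) d hd1, ?_, ?_⟩
  · rintro φ ⟨i, ⟨-, rfl⟩⟩
    simp only [realize_not, Term.realize, realize_bdEqual, Function.comp_apply, Sum.elim_inr,
      Fin.snoc_last, Fin.snoc_castSucc]
    intro heq
    refine htT ⟨i, ?_⟩
    show xs i.castSucc = mkLine (c • w) d hd1
    exact heq.symm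
  · simp only [realize_oBF, Fin.snoc_last, Fin.snoc_castSucc]
    show Line.Perp s _
    rw [perp_iff, mkLine_dir]

/-- F²_ℝ, the structure of all lines in the Euclidean plane with O interpreted
as perpendicularity, is a model of SAPP. -/
theorem statement_0 : Line ⊨ SAPP := by
  rw [Theory.model_iff]
  intro φ hφ
  simp only [SAPP, Set.mem_union, Set.mem_setOf_eq, Set.mem_insert_iff,
    Set.mem_singleton_iff] at hφ
  rcases hφ with ((⟨n, -, rfl⟩ | ⟨n, -, rfl⟩) | rfl | rfl | rfl | rfl)
  · exact sat_lam1 n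
  · exact sat_lam2 n
  · exact sat_lam3
  · exact sat_lam4
  · exact sat_lam5
  · exact sat_lam6
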